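/- Let k be a field. The common zero locus in P³ of the two quadrics q₁ = T₁² − T₀T₂ and q₂ = T₂² − T₀T₃ is exactly the image of the map P¹ → P³ given by (s : t) ↦ (s⁴ : s³t : s²t² : t⁴). -/

import Mathlib

/-- The common zero locus in P³ of q₁ = T₁² − T₀T₂ and q₂ = T₂² − T₀T₃ is
exactly the image of P¹ → P³, (s : t) ↦ (s⁴ : s³t : s²t² : t⁴): stated on nonzero
representative vectors up to scalar. -/
theorem stmt10 {k : Type*} [Field k] (v : Fin 4 → k) (hv : v ≠ 0) :
    (v 1 ^ 2 - v 0 * v 2 = 0 ∧ v 2 ^ 2 - v 0 * v 3 = 0) ↔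
      ∃ s t c : k, c ≠ 0 ∧ v = c • ![s ^ 4, s ^ 3 * t, s ^ 2 * t ^ 2, t ^ 4] := by
  constructor
  · rintro ⟨h1, h2⟩
    by_cases h0 : v 0 = 0
    · have hv1 : v 1 = 0 := by
        have : v 1 ^ 2 = 0 := by linear_combination h1 + v 2 * h0
        exact pow_eq_zero_iff (by norm_num) |>.mp this
      have hv2 : v 2 = 0 := by
        have : v 2 ^ 2 = 0 := by linear_combination h2 + v 3 * h0
        exact pow_eq_zero_iff (by norm_num) |>.mp this
      have hv3 : v 3 ≠ 0 := by
        intro h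
        apply hv
        funext i
        fin_cases i <;> simpa [h0, hv1, hv2, h]
      refine ⟨0, 1, v 3, hv3, ?_⟩
      funext i
      fin_cases i <;> simp [h0, hv1, hv2]
    · refine ⟨1, v 1 / v 0, v 0, h0, ?_⟩
      funext i
      fin_cases i
      · show v 0 = v 0 * 1 ^ 4; ring
      · show v 1 = v 0 * (1 ^ 3 * (v 1 / v 0)); field_simp
      · show v 2 = v 0 * (1 ^ 2 * (v 1 / v 0) ^ 2)
        field_simp
        linear_combination -h1
      · show v 3 = v 0 * (v 1 / v 0) ^ 4
        field_simp
        linear_combination (-(v 1 ^ 2 + v 0 * v 2)) * h1 - v 0 ^ 2 * h2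
  · rintro ⟨s, t, c, hc, rfl⟩
    constructor <;> simp <;> ring
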